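/- Fix α with 1 < α < 2 and let N₀ = 3·⌈α + 1⌉. Define c : ℕ → ℝ by c(n) = 0 for n < N₀ and, for n ≥ N₀, c(n) = c(n') + c(n'') + c(n''') + n + n' + n'', where n''' = ⌊n/(α + 1)⌋ + 1, n* = n − n''', n'' = ⌊n*/(α + 1)⌋ + 1, n' = n* − n''. Then (i) c(n + 1) > c(n) for all n ≥ N₀, and (ii) for every ε > 0 there exists N such that for all n ≥ N, c(n) ≥ (c_α − ε)·n·log₂ n. (The function c(n) is the merge cost of α-merge sort, and also of α-stack sort, on the adversarial run-length sequence R_amerge(n); hence both sorts have worst-case merge cost at least (c_α − o(1))·n·log₂ n.) -/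

import Mathlib

open Real

/-- The constant `c_α = (α+1)/((α+1)·log₂(α+1) − α·log₂ α)`. -/
noncomputable def cA (α : ℝ) : ℝ :=
  (α + 1) / ((α + 1) * logb 2 (α + 1) - α * logb 2 α)

/-- `n''' = ⌊n/(α+1)⌋ + 1`, the least integer greater than `n/(α+1)`. -/
noncomputable def nPPP (α : ℝ) (n : ℕ) : ℕ := ⌊(n : ℝ) / (α + 1)⌋₊ + 1

/-- `n* = n − n'''`. -/
noncomputable def nStar (α : ℝ) (n : ℕ) : ℕ := n - nPPP α n

/-- `n'' = ⌊n*/(α+1)⌋ + 1`. -/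
noncomputable def nPP (α : ℝ) (n : ℕ) : ℕ := ⌊(nStar α n : ℝ) / (α + 1)⌋₊ + 1

/-- `n' = n* − n''`. -/
noncomputable def nP (α : ℝ) (n : ℕ) : ℕ := nStar α n - nPP α n

noncomputable def ent (x : ℝ) : ℝ := Real.negMulLog x + Real.negMulLog (1 - x)

lemma ent_continuous : Continuous ent := by
  unfold ent
  exact Real.continuous_negMulLog.add
    (Real.continuous_negMulLog.comp (continuous_const.sub continuous_id))

lemma ent_deriv {x : ℝ} (h0 : 0 < x) (h1 : x < 1) :
    HasDerivAt ent (Real.log (1 - x) - Real.log x) x := by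
  have h1' : (1 : ℝ) - x ≠ 0 := by linarith
  have d1 := Real.hasDerivAt_negMulLog h0.ne'
  have d2 : HasDerivAt (fun y : ℝ => Real.negMulLog (1 - y))
      (Real.log (1 - x) + 1) x := by
    have := (Real.hasDerivAt_negMulLog h1').comp x
      ((hasDerivAt_const x (1:ℝ)).sub (hasDerivAt_id x))
    exact this.congr_deriv (by ring)
  have := d1.add d2
  exact this.congr_deriv (by ring)

lemma ent_upper {t u : ℝ} (ht0 : 0 < t) (htu : t < u) (hu1 : u < 1) :
    ent u ≤ ent t + (u - t) * (Real.log (1 - t) - Real.log t) := by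
  obtain ⟨ξ, hξ, hs⟩ := exists_hasDerivAt_eq_slope ent
    (fun x => Real.log (1 - x) - Real.log x) htu ent_continuous.continuousOn
    (fun x hx => ent_deriv (lt_trans ht0 hx.1) (lt_trans hx.2 hu1))
  have hξ0 : 0 < ξ := lt_trans ht0 hξ.1
  have hξ1 : ξ < 1 := lt_trans hξ.2 hu1
  have hb : Real.log (1 - ξ) - Real.log ξ ≤ Real.log (1 - t) - Real.log t := by
    have hξt : t < ξ := hξ.1
    have l1 : Real.log (1 - ξ) ≤ Real.log (1 - t) :=
      Real.log_le_log (by linarith) (by linarith)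
    have l2 : Real.log t ≤ Real.log ξ := Real.log_le_log ht0 hξ.1.le
    linarith
  have hslope : (ent u - ent t) / (u - t) ≤ Real.log (1 - t) - Real.log t := by
    rw [← hs]; exact hb
  have hut : 0 < u - t := by linarith
  have := (div_le_iff₀ hut).mp hslope
  linarith


lemma denom_pos {α : ℝ} (hα1 : 1 < α) :
    0 < (α + 1) * Real.log (α + 1) - α * Real.log α := by
  have l1 : Real.log α < Real.log (α + 1) := Real.log_lt_log (by linarith) (by linarith)
  have l0 : 0 < Real.log α := Real.log_pos hα1
  nlinarith

lemma cA_eq {α : ℝ} (hα1 : 1 < α) :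
    cA α = (α + 1) * Real.log 2 / ((α + 1) * Real.log (α + 1) - α * Real.log α) := by
  have hD := denom_pos hα1
  have hl2 : (0:ℝ) < Real.log 2 := Real.log_pos one_lt_two
  unfold cA
  simp only [Real.logb]
  rw [div_eq_div_iff]
  · field_simp
  · have : (α + 1) * (Real.log (α+1) / Real.log 2) - α * (Real.log α / Real.log 2)
        = ((α + 1) * Real.log (α+1) - α * Real.log α) / Real.log 2 := by ring
    rw [this]
    positivity
  · positivity

lemma cA_pos {α : ℝ} (hα1 : 1 < α) : 0 < cA α := by
  rw [cA_eq hα1]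
  have := denom_pos hα1
  have hl2 : (0:ℝ) < Real.log 2 := Real.log_pos one_lt_two
  positivity

lemma ent_t {α : ℝ} (hα1 : 1 < α) :
    ent (1/(α+1)) = ((α + 1) * Real.log (α + 1) - α * Real.log α) / (α + 1) := by
  have ha0 : (0:ℝ) < α + 1 := by linarith
  have hα0 : (0:ℝ) < α := by linarith
  have h1t : 1 - 1/(α+1) = α/(α+1) := by field_simp; ring
  unfold ent Real.negMulLog
  rw [h1t, Real.log_div hα0.ne' ha0.ne', Real.log_div one_ne_zero ha0.ne', Real.log_one]
  field_simp
  ring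

lemma splitA {α : ℝ} (hα1 : 1 < α) (hα2 : α < 2) {m p q : ℕ} (hm : 4 ≤ m)
    (hsum : p + q = m) (hlb : (m:ℝ)/(α+1) < p) (hub : (p:ℝ) ≤ (m:ℝ)/(α+1) + 1) :
    cA α * ((m:ℝ) * logb 2 m - (p:ℝ) * logb 2 p - (q:ℝ) * logb 2 q)
      ≤ (m:ℝ) + cA α * logb 2 α := by
  have ha0 : (0:ℝ) < α + 1 := by linarith
  have ha3 : (2:ℝ) < α + 1 := by linarith
  have hm0 : (0:ℝ) < m := by exact_mod_cast Nat.lt_of_lt_of_le (by norm_num) hm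
  have hm4 : (4:ℝ) ≤ m := by exact_mod_cast hm
  have hl2 : (0:ℝ) < Real.log 2 := Real.log_pos one_lt_two
  have hloga : (0:ℝ) ≤ Real.log α := Real.log_nonneg hα1.le
  have hp0 : (0:ℝ) < p := lt_trans (by positivity) hlb
  have hpm : (p:ℝ) < m := by
    have : (m:ℝ)/(α+1) < m/2 := by
      apply div_lt_div_of_pos_left hm0 (by norm_num) ha3
    nlinarith
  have hq : (q:ℝ) = m - p := by
    have : (p:ℝ) + q = m := by exact_mod_cast hsum
    linarith
  have hq0 : (0:ℝ) < q := by rw [hq]; linarith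
  set t : ℝ := 1/(α+1) with ht
  set u : ℝ := (p:ℝ)/m with hu
  have ht0 : 0 < t := by positivity
  have htu : t < u := by
    rw [hu, lt_div_iff₀ hm0]
    calc t * m = m/(α+1) := by rw [ht]; ring
    _ < p := hlb
  have hu0 : 0 < u := lt_trans ht0 htu
  have hu1 : u < 1 := (div_lt_one hm0).mpr hpm
  have h1u : 0 < 1 - u := by linarith
  have hut : u - t ≤ 1/m := by
    rw [hu, ht]
    have hub' : (p:ℝ) * (α+1) ≤ (m:ℝ) + (α+1) := by
      have h2 := mul_le_mul_of_nonneg_right hub ha0.le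
      rwa [add_mul, div_mul_cancel₀ _ ha0.ne', one_mul] at h2
    rw [div_sub_div _ _ hm0.ne' ha0.ne', div_le_div_iff₀ (by positivity) hm0]
    nlinarith
  have hpu : (p:ℝ) = m * u := by rw [hu]; field_simp
  have hqu : (q:ℝ) = m * (1 - u) := by rw [hq, hpu]; ring
  have hid : (m:ℝ) * logb 2 m - (p:ℝ) * logb 2 p - (q:ℝ) * logb 2 q
      = m * ent u / Real.log 2 := by
    have hlogp : Real.log p = Real.log m + Real.log u := by
      rw [hpu, Real.log_mul hm0.ne' hu0.ne']
    have hlogq : Real.log q = Real.log m + Real.log (1 - u) := by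
      rw [hqu, Real.log_mul hm0.ne' h1u.ne']
    simp only [Real.logb, ent, Real.negMulLog]
    rw [hlogp, hlogq, hpu, hqu]
    field_simp
    ring
  have hd : Real.log (1 - t) - Real.log t = Real.log α := by
    have hα0 : (0:ℝ) < α := by linarith
    have h1t : 1 - t = α/(α+1) := by rw [ht]; field_simp; ring
    rw [h1t, ht, Real.log_div hα0.ne' ha0.ne', Real.log_div one_ne_zero ha0.ne',
      Real.log_one]
    ring
  have hent : ent u ≤ ent t + (1/m) * Real.log α := by
    have h := ent_upper ht0 htu hu1
    rw [hd] at h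
    have : (u - t) * Real.log α ≤ (1/m) * Real.log α :=
      mul_le_mul_of_nonneg_right hut hloga
    linarith
  have hkey : cA α * ent t / Real.log 2 = 1 := by
    have hD := denom_pos hα1
    rw [cA_eq hα1, ht, ent_t hα1]
    field_simp [hD.ne', hl2.ne', ha0.ne']
  have hcA0 : 0 < cA α := cA_pos hα1
  rw [hid]
  have step1 : cA α * (m * ent u / Real.log 2)
      ≤ cA α * (m * (ent t + (1/m) * Real.log α) / Real.log 2) := by
    gcongr
  have step2 : cA α * (m * (ent t + (1/m) * Real.log α) / Real.log 2)
      = (m:ℝ) * (cA α * ent t / Real.log 2) + cA α * (Real.log α / Real.log 2) := by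
    field_simp
  rw [step2, hkey] at step1
  simpa [Real.logb] using step1


lemma floor_bounds {α : ℝ} (hα1 : 1 < α) {m : ℕ} :
    (m:ℝ)/(α+1) < (⌊(m : ℝ) / (α + 1)⌋₊ + 1 : ℕ) ∧
    ((⌊(m : ℝ) / (α + 1)⌋₊ + 1 : ℕ) : ℝ) ≤ (m:ℝ)/(α+1) + 1 := by
  have h0 : (0:ℝ) ≤ (m:ℝ)/(α+1) := by positivity
  constructor
  · push_cast
    exact Nat.lt_floor_add_one _
  · push_cast
    have := Nat.floor_le h0
    linarith

lemma child_facts {α : ℝ} (hα1 : 1 < α) (hα2 : α < 2) {n : ℕ} (hn : 9 ≤ n) :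
    nPPP α n + nStar α n = n ∧ nP α n + nPP α n = nStar α n ∧
    4 ≤ nStar α n ∧ 1 ≤ nP α n ∧ 1 ≤ nPP α n ∧ 1 ≤ nPPP α n ∧
    nStar α n < n ∧
    (n:ℝ)/(α+1) < nPPP α n ∧ (nPPP α n : ℝ) ≤ (n:ℝ)/(α+1) + 1 ∧
    (nStar α n:ℝ)/(α+1) < nPP α n ∧ (nPP α n : ℝ) ≤ (nStar α n:ℝ)/(α+1) + 1 := by
  have ha3 : (2:ℝ) < α + 1 := by linarith
  have ha0 : (0:ℝ) < α + 1 := by linarith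
  have hn9 : (9:ℝ) ≤ n := by exact_mod_cast hn
  have hn0 : (0:ℝ) < n := by linarith
  obtain ⟨hlb3, hub3⟩ := floor_bounds (m := n) hα1
  have hdiv : (n:ℝ)/(α+1) < (n:ℝ)/2 := div_lt_div_of_pos_left hn0 (by norm_num) ha3
  have h3nR : (nPPP α n : ℝ) < n := by
    rw [nPPP]
    calc ((⌊(n : ℝ) / (α + 1)⌋₊ + 1 : ℕ) : ℝ) ≤ (n:ℝ)/(α+1) + 1 := hub3
    _ < n := by linarith
  have h3n : nPPP α n < n := by exact_mod_cast h3nR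
  have hstar : nPPP α n + nStar α n = n := by rw [nStar]; omega
  have hsR : (nStar α n : ℝ) = n - nPPP α n := by
    rw [nStar, Nat.cast_sub h3n.le]
  have h4s : 4 ≤ nStar α n := by
    have : (3:ℝ) < nStar α n := by
      rw [hsR, nPPP]
      have : ((⌊(n : ℝ) / (α + 1)⌋₊ + 1 : ℕ) : ℝ) ≤ (n:ℝ)/(α+1) + 1 := hub3
      nlinarith
    have : 3 < nStar α n := by exact_mod_cast this
    omega
  have hs0 : (0:ℝ) < nStar α n := by
    have : (0:ℕ) < nStar α n := by omega
    exact_mod_cast this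
  obtain ⟨hlb2, hub2⟩ := floor_bounds (m := nStar α n) hα1
  have hdiv2 : (nStar α n:ℝ)/(α+1) < (nStar α n:ℝ)/2 :=
    div_lt_div_of_pos_left hs0 (by norm_num) ha3
  have hs4R : (4:ℝ) ≤ nStar α n := by exact_mod_cast h4s
  have h2sR : (nPP α n : ℝ) < nStar α n := by
    rw [nPP]
    calc ((⌊(nStar α n : ℝ) / (α + 1)⌋₊ + 1 : ℕ) : ℝ) ≤ (nStar α n:ℝ)/(α+1) + 1 := hub2
    _ < nStar α n := by nlinarith
  have h2s : nPP α n < nStar α n := by exact_mod_cast h2sR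
  have hP : nP α n + nPP α n = nStar α n := by rw [nP]; omega
  have h31 : 1 ≤ nPPP α n := by rw [nPPP]; omega
  refine ⟨hstar, hP, h4s, by omega, by rw [nPP]; omega, by rw [nPPP]; omega, by omega,
    ?_, ?_, ?_, ?_⟩
  · rw [nPPP]; exact hlb3
  · rw [nPPP]; exact hub3
  · rw [nPP]; exact hlb2
  · rw [nPP]; exact hub2

lemma c_nonneg {α : ℝ} (hα1 : 1 < α) (hα2 : α < 2) {c : ℕ → ℝ}
    (h0 : ∀ n < 9, c n = 0)
    (hrec : ∀ n, 9 ≤ n → c n = c (nP α n) + c (nPP α n) + c (nPPP α n)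
      + (n : ℝ) + (nP α n : ℝ) + (nPP α n : ℝ)) :
    ∀ n, 0 ≤ c n := by
  intro n
  induction n using Nat.strong_induction_on with
  | _ n ih =>
    by_cases hn : n < 9
    · rw [h0 n hn]
    · push_neg at hn
      obtain ⟨hstar, hP, h4s, h1, h2, h3, hsn, -⟩ := child_facts hα1 hα2 hn
      rw [hrec n hn]
      have i1 := ih (nP α n) (by omega)
      have i2 := ih (nPP α n) (by omega)
      have i3 := ih (nPPP α n) (by omega)
      have j1 : (0:ℝ) ≤ (n:ℝ) := Nat.cast_nonneg n
      have j2 : (0:ℝ) ≤ (nP α n:ℝ) := Nat.cast_nonneg _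
      have j3 : (0:ℝ) ≤ (nPP α n:ℝ) := Nat.cast_nonneg _
      linarith

lemma c_lower {α : ℝ} (hα1 : 1 < α) (hα2 : α < 2) {c : ℕ → ℝ}
    (h0 : ∀ n < 9, c n = 0)
    (hrec : ∀ n, 9 ≤ n → c n = c (nP α n) + c (nPP α n) + c (nPPP α n)
      + (n : ℝ) + (nP α n : ℝ) + (nPP α n : ℝ)) :
    ∀ n : ℕ, 1 ≤ n → cA α * ((n:ℝ) * logb 2 n)
      - (cA α * logb 2 9 + cA α * logb 2 α) * n + cA α * logb 2 α ≤ c n := by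
  have hcA0 := cA_pos hα1
  have hD0 : 0 ≤ cA α * logb 2 α :=
    mul_nonneg hcA0.le (Real.logb_nonneg one_lt_two hα1.le)
  intro n
  induction n using Nat.strong_induction_on with
  | _ n ih =>
    intro hn1
    by_cases hn : n < 9
    · rw [h0 n hn]
      have hn1R : (1:ℝ) ≤ n := by exact_mod_cast hn1
      have hn9R : (n:ℝ) ≤ 9 := by
        have : n ≤ 9 := by omega
        exact_mod_cast this
      have hlogn : logb 2 (n:ℝ) ≤ logb 2 9 :=
        Real.logb_le_logb_of_le one_lt_two (by linarith) hn9R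
      have h0n : 0 ≤ logb 2 (n:ℝ) := Real.logb_nonneg one_lt_two hn1R
      nlinarith [mul_le_mul_of_nonneg_left
        (mul_le_mul_of_nonneg_left hlogn (by linarith : (0:ℝ) ≤ (n:ℝ))) hcA0.le]
    · push_neg at hn
      obtain ⟨hstar, hP, h4s, h1, h2, h3, hsn, hlb3, hub3, hlb2, hub2⟩ :=
        child_facts hα1 hα2 hn
      have s1 := splitA hα1 hα2 (m := n) (p := nPPP α n) (q := nStar α n)
        (by omega) hstar hlb3 hub3
      have s2 := splitA hα1 hα2 (m := nStar α n) (p := nPP α n) (q := nP α n)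
        h4s (by omega) hlb2 hub2
      have i1 := ih (nP α n) (by omega) h1
      have i2 := ih (nPP α n) (by omega) h2
      have i3 := ih (nPPP α n) (by omega) h3
      have e1 : (nP α n : ℝ) + (nPP α n : ℝ) + (nPPP α n : ℝ) = (n:ℝ) := by
        have : nP α n + nPP α n + nPPP α n = n := by omega
        exact_mod_cast this
      have e2 : (nP α n : ℝ) + (nPP α n : ℝ) = (nStar α n : ℝ) := by
        exact_mod_cast hP
      rw [hrec n hn]
      have e1' : (cA α * logb 2 9 + cA α * logb 2 α) * ((nP α n:ℝ) + nPP α n + nPPP α n)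
          = (cA α * logb 2 9 + cA α * logb 2 α) * n := by rw [e1]
      ring_nf at s1 s2 i1 i2 i3 e1' ⊢
      linarith

lemma floor_succ {α : ℝ} (hα1 : 1 < α) (m : ℕ) :
    ⌊((m:ℝ) + 1)/(α+1)⌋₊ = ⌊(m:ℝ)/(α+1)⌋₊ ∨
    ⌊((m:ℝ) + 1)/(α+1)⌋₊ = ⌊(m:ℝ)/(α+1)⌋₊ + 1 := by
  have ha0 : (0:ℝ) < α + 1 := by linarith
  have hmono : ⌊(m:ℝ)/(α+1)⌋₊ ≤ ⌊((m:ℝ)+1)/(α+1)⌋₊ :=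
    Nat.floor_le_floor (by gcongr; linarith)
  have h1 : ((m:ℝ)+1)/(α+1) ≤ (m:ℝ)/(α+1) + 1 := by
    rw [add_div]
    have : 1/(α+1) ≤ 1 := by rw [div_le_one ha0]; linarith
    linarith
  have hup : ⌊((m:ℝ)+1)/(α+1)⌋₊ ≤ ⌊(m:ℝ)/(α+1)⌋₊ + 1 := by
    calc ⌊((m:ℝ)+1)/(α+1)⌋₊ ≤ ⌊(m:ℝ)/(α+1) + 1⌋₊ := Nat.floor_le_floor h1
    _ = ⌊(m:ℝ)/(α+1)⌋₊ + 1 := Nat.floor_add_one (by positivity)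
  omega

lemma c_mono {α : ℝ} (hα1 : 1 < α) (hα2 : α < 2) {c : ℕ → ℝ}
    (h0 : ∀ n < 9, c n = 0)
    (hrec : ∀ n, 9 ≤ n → c n = c (nP α n) + c (nPP α n) + c (nPPP α n)
      + (n : ℝ) + (nP α n : ℝ) + (nPP α n : ℝ)) :
    ∀ n : ℕ, c n ≤ c (n + 1) ∧ (9 ≤ n → c n + 1 ≤ c (n + 1)) := by
  have hnn := c_nonneg hα1 hα2 h0 hrec
  intro n
  induction n using Nat.strong_induction_on with
  | _ n ih =>
    by_cases hn : 9 ≤ n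
    case neg =>
      refine ⟨?_, fun h => absurd h hn⟩
      rw [h0 n (by omega)]
      exact hnn (n+1)
    case pos =>
      suffices h : c n + 1 ≤ c (n+1) from ⟨by linarith, fun _ => h⟩
      obtain ⟨hstar, hP, h4s, h1, h2, h3, hsn, -⟩ := child_facts hα1 hα2 hn
      have hrn := hrec n hn
      have hrn1 := hrec (n+1) (by omega)
      have hc3 : nPPP α (n+1) = nPPP α n ∨ nPPP α (n+1) = nPPP α n + 1 := by
        have := floor_succ hα1 n
        unfold nPPP
        push_cast
        omega
      rcases hc3 with hA | hA
      · -- n''' unchanged, n* increments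
        have hsEq : nStar α (n+1) = nStar α n + 1 := by
          unfold nStar
          omega
        have hc2 : nPP α (n+1) = nPP α n ∨ nPP α (n+1) = nPP α n + 1 := by
          have := floor_succ hα1 (nStar α n)
          unfold nPP
          rw [hsEq]
          push_cast
          omega
        rcases hc2 with hB | hB
        · -- n'' unchanged, n' increments
          have hpEq : nP α (n+1) = nP α n + 1 := by
            unfold nP
            rw [hsEq, hB]
            omega
          rw [hrn1, hA, hB, hpEq]
          have := (ih (nP α n) (by omega)).1
          push_cast
          push_cast at hrn
          linarith
        · -- n'' increments, n' unchanged
          have hpEq : nP α (n+1) = nP α n := by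
            unfold nP
            rw [hsEq, hB]
            omega
          rw [hrn1, hA, hB, hpEq]
          have := (ih (nPP α n) (by omega)).1
          push_cast
          push_cast at hrn
          linarith
      · -- n''' increments, n* unchanged
        have hsEq : nStar α (n+1) = nStar α n := by
          unfold nStar
          omega
        have h2Eq : nPP α (n+1) = nPP α n := by unfold nPP; rw [hsEq]
        have hpEq : nP α (n+1) = nP α n := by unfold nP; rw [hsEq, h2Eq]
        rw [hrn1, hA, h2Eq, hpEq]
        have := (ih (nPPP α n) (by omega)).1
        push_cast
        push_cast at hrn
        linarith

lemma ceil_eq3 {α : ℝ} (hα1 : 1 < α) (hα2 : α < 2) : ⌈α + 1⌉₊ = 3 := by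
  rw [Nat.ceil_eq_iff (by norm_num)]
  constructor
  · push_cast; linarith
  · push_cast; linarith

/-- The merge cost `c(n)` of α-merge sort (and α-stack sort) on the adversarial
run-length sequence `R_amerge(n)` is strictly increasing for `n ≥ N₀`, and is
at least `(c_α − o(1))·n·log₂ n`. -/
theorem alphamerge_lower_bound (α : ℝ) (hα1 : 1 < α) (hα2 : α < 2) (c : ℕ → ℝ)
    (h0 : ∀ n < 3 * ⌈α + 1⌉₊, c n = 0)
    (hrec : ∀ n, 3 * ⌈α + 1⌉₊ ≤ n →
      c n = c (nP α n) + c (nPP α n) + c (nPPP α n)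
            + (n : ℝ) + (nP α n : ℝ) + (nPP α n : ℝ)) :
    (∀ n, 3 * ⌈α + 1⌉₊ ≤ n → c n < c (n + 1)) ∧
    (∀ ε > (0 : ℝ), ∃ N : ℕ, ∀ n ≥ N, (cA α - ε) * (n : ℝ) * logb 2 n ≤ c n) := by
  rw [ceil_eq3 hα1 hα2] at h0 hrec
  norm_num at h0 hrec
  have hmono := c_mono hα1 hα2 h0 hrec
  have hlow := c_lower hα1 hα2 h0 hrec
  constructor
  · intro n hn
    rw [ceil_eq3 hα1 hα2] at hn
    norm_num at hn
    have := (hmono n).2 hn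
    linarith
  · intro ε hε
    set B := cA α * logb 2 9 + cA α * logb 2 α with hB
    have hcA0 := cA_pos hα1
    have hD0 : 0 ≤ cA α * logb 2 α :=
      mul_nonneg hcA0.le (Real.logb_nonneg one_lt_two hα1.le)
    have hB0 : 0 ≤ B := by
      have : 0 ≤ cA α * logb 2 9 :=
        mul_nonneg hcA0.le (Real.logb_nonneg one_lt_two (by norm_num))
      linarith
    refine ⟨max 2 ⌈(2:ℝ) ^ (B / ε)⌉₊, fun n hnN => ?_⟩
    have hn2 : 2 ≤ n := le_trans (le_max_left _ _) hnN
    have hn1R : (1:ℝ) ≤ n := by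
      have : (2:ℕ) ≤ n := hn2
      exact_mod_cast le_trans (by norm_num) this
    have hpow : (2:ℝ) ^ (B / ε) ≤ n := by
      have h1 : ⌈(2:ℝ) ^ (B / ε)⌉₊ ≤ n := le_trans (le_max_right _ _) hnN
      calc (2:ℝ) ^ (B / ε) ≤ (⌈(2:ℝ) ^ (B / ε)⌉₊ : ℝ) := Nat.le_ceil _
      _ ≤ n := by exact_mod_cast h1
    have hlogn : B / ε ≤ logb 2 n := by
      calc B / ε = logb 2 ((2:ℝ) ^ (B / ε)) :=
        (Real.logb_rpow (by norm_num) (by norm_num)).symm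
      _ ≤ logb 2 n := Real.logb_le_logb_of_le one_lt_two (by positivity) hpow
    have hBn : B * n ≤ ε * ((n:ℝ) * logb 2 n) := by
      have hBε : B ≤ ε * logb 2 n := by
        rw [div_le_iff₀ hε] at hlogn
        linarith
      have hn0 : (0:ℝ) ≤ n := by linarith
      calc B * n ≤ (ε * logb 2 n) * n := mul_le_mul_of_nonneg_right hBε hn0
      _ = ε * ((n:ℝ) * logb 2 n) := by ring
    have hl := hlow n (by omega)
    have : (cA α - ε) * (n:ℝ) * logb 2 n = cA α * ((n:ℝ) * logb 2 n) - ε * ((n:ℝ) * logb 2 n) := by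
      ring
    rw [this]
    linarith
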